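/- Let 𝓕 = 𝓖 = ((e_m, e_m*))_{m≥1} be the canonical orthonormal basis of the real space ℓ_2 with its coordinate functionals, and let v = e_1 ⊗ e_1 + e_1 ⊗ e_2 + e_2 ⊗ e_2 − e_2 ⊗ e_1 ∈ ℓ_2 ⊗ ℓ_2. Then the injective tensor norm satisfies ε(v) = √2, while α^Bess_{𝓕,𝓖}(v) = 2. In particular α^Bess_{𝓕,𝓖} is not proportional to the injective norm on ℓ_2 ⊗ ℓ_2. -/

import Mathlib

open Filter Finset TensorProduct
open scoped ENNReal

/-- The real space `ℓ_2`. -/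
noncomputable abbrev ellTwoR := lp (fun _ : ℕ => ℝ) 2

/-- The canonical basis vector `e_n` of the real `ℓ_2`. -/
noncomputable def eTwoR (n : ℕ) : ellTwoR := lp.single 2 n (1 : ℝ)

/-- The functional `f* ⊗ g*` on the algebraic tensor product. -/
noncomputable def dualPairR (f : ellTwoR →L[ℝ] ℝ) (g : ellTwoR →L[ℝ] ℝ) :
    ellTwoR ⊗[ℝ] ellTwoR →ₗ[ℝ] ℝ :=
  TensorProduct.lift (((LinearMap.mul ℝ ℝ).compl₂ g.toLinearMap).comp f.toLinearMap)

/-- The Besselian crossnorm `α^Bess_{𝓕,𝓖}` on `ℓ_2 ⊗ ℓ_2`, where `𝓕 = 𝓖` is the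
canonical orthonormal basis `((e_m, e_m*))` of the real `ℓ_2` (so `e_m*(x) = x_m`). -/
noncomputable def alphaBessL2R (u : ellTwoR ⊗[ℝ] ellTwoR) : ℝ :=
  sInf {t : ℝ | ∃ (R : ℕ) (x y : ℕ → ellTwoR),
    u = ∑ r ∈ Finset.range R, x r ⊗ₜ[ℝ] y r ∧
    t = ⨆ fg : {f : ellTwoR →L[ℝ] ℝ // ‖f‖ ≤ 1} × {g : ellTwoR →L[ℝ] ℝ // ‖g‖ ≤ 1},
      ∑ r ∈ Finset.range R, ∑' mn : ℕ × ℕ,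
        ‖x r mn.1‖ * ‖y r mn.2‖ * ‖fg.1.1 (eTwoR mn.1)‖ * ‖fg.2.1 (eTwoR mn.2)‖}

/-- The injective tensor norm `ε` on `ℓ_2 ⊗ ℓ_2` (with respect to the `ℓ_2` norms). -/
noncomputable def injNormL2R (u : ellTwoR ⊗[ℝ] ellTwoR) : ℝ :=
  ⨆ fg : {f : ellTwoR →L[ℝ] ℝ // ‖f‖ ≤ 1} × {g : ellTwoR →L[ℝ] ℝ // ‖g‖ ≤ 1},
    ‖dualPairR fg.1.1 fg.2.1 u‖

/-! ### Auxiliary lemmas -/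

section Aux

instance : Nonempty {f : ellTwoR →L[ℝ] ℝ // ‖f‖ ≤ 1} := ⟨⟨0, by simp⟩⟩

lemma eTwoR_apply (n m : ℕ) : (eTwoR n : ∀ _ : ℕ, ℝ) m = if m = n then 1 else 0 := by
  rw [eTwoR, lp.single_apply]
  split_ifs with h
  · subst h; simp
  · simp [Pi.single_apply, h]

lemma norm_eTwoR (n : ℕ) : ‖eTwoR n‖ = 1 := by
  simpa [eTwoR] using lp.norm_single (p := 2) (E := fun _ : ℕ => ℝ) (by norm_num) n (1:ℝ)

lemma dualPairR_tmul (f g : ellTwoR →L[ℝ] ℝ) (a b : ellTwoR) :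
    dualPairR f g (a ⊗ₜ[ℝ] b) = f a * g b := rfl

/-- The Riesz representative of a functional. -/
noncomputable def coordFun (f : ellTwoR →L[ℝ] ℝ) : ellTwoR :=
  (InnerProductSpace.toDual ℝ ellTwoR).symm f

lemma norm_coordFun (f : ellTwoR →L[ℝ] ℝ) : ‖coordFun f‖ = ‖f‖ :=
  (InnerProductSpace.toDual ℝ ellTwoR).symm.norm_map f

lemma apply_eq_inner (f : ellTwoR →L[ℝ] ℝ) (x : ellTwoR) :
    f x = inner ℝ (coordFun f) x := by
  conv_lhs => rw [← (InnerProductSpace.toDual ℝ ellTwoR).apply_symm_apply f]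
  rw [InnerProductSpace.toDual_apply_apply]; rfl

lemma apply_eTwoR (f : ellTwoR →L[ℝ] ℝ) (m : ℕ) : f (eTwoR m) = coordFun f m := by
  rw [apply_eq_inner, eTwoR, lp.inner_single_right]
  simp [RCLike.inner_apply]

/-- The functional `⟪z, ·⟫`. -/
noncomputable def tdl (z : ellTwoR) : ellTwoR →L[ℝ] ℝ :=
  InnerProductSpace.toDual ℝ ellTwoR z

lemma norm_tdl (z : ellTwoR) : ‖tdl z‖ = ‖z‖ :=
  (InnerProductSpace.toDual ℝ ellTwoR).norm_map z

lemma tdl_apply_e (z : ellTwoR) (m : ℕ) : tdl z (eTwoR m) = z m := by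
  rw [tdl, InnerProductSpace.toDual_apply_apply, eTwoR, lp.inner_single_right]
  simp [RCLike.inner_apply]

lemma tdl_e_apply (m : ℕ) (x : ellTwoR) : tdl (eTwoR m) x = x m := by
  rw [tdl, InnerProductSpace.toDual_apply_apply, eTwoR, lp.inner_single_left]
  simp [RCLike.inner_apply]

lemma conj22 : (2 : ℝ≥0∞).toReal.HolderConjugate (2 : ℝ≥0∞).toReal := by
  rw [ENNReal.toReal_ofNat]; exact Real.HolderConjugate.two_two

lemma summable_mul_coord (w z : ellTwoR) : Summable fun m => ‖w m‖ * ‖z m‖ :=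
  lp.summable_mul conj22 w z

lemma tsum_mul_coord_le (w z : ellTwoR) : ∑' m, ‖w m‖ * ‖z m‖ ≤ ‖w‖ * ‖z‖ :=
  lp.tsum_mul_le_mul_norm' conj22 w z

lemma sum_sq_le (z : ellTwoR) (s : Finset ℕ) : ∑ i ∈ s, ‖z i‖ ^ 2 ≤ ‖z‖ ^ 2 := by
  have := lp.sum_rpow_le_norm_rpow (p := 2) (by norm_num) z s
  have h2 : ((2 : ℝ≥0∞).toReal) = ((2 : ℕ) : ℝ) := by norm_num
  simpa [h2, Real.rpow_natCast] using this

lemma sq_apply_le (f : ellTwoR →L[ℝ] ℝ) (hf : ‖f‖ ≤ 1) :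
    f (eTwoR 0) ^ 2 + f (eTwoR 1) ^ 2 ≤ 1 := by
  have h := sum_sq_le (coordFun f) {0, 1}
  rw [Finset.sum_pair (by norm_num)] at h
  have hn : ‖coordFun f‖ ^ 2 ≤ 1 := by
    rw [norm_coordFun]; nlinarith [norm_nonneg f]
  rw [apply_eTwoR, apply_eTwoR]
  simp only [Real.norm_eq_abs, sq_abs] at h
  linarith

lemma norm_e0_add_e1 : ‖eTwoR 0 + eTwoR 1‖ = Real.sqrt 2 := by
  have h := lp.norm_sum_single (p := 2) (E := fun _ : ℕ => ℝ) (by norm_num)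
      (fun _ => (1:ℝ)) {0, 1}
  have hsum : (∑ i ∈ ({0,1} : Finset ℕ), lp.single 2 i ((fun _ => (1:ℝ)) i)) =
      eTwoR 0 + eTwoR 1 := by
    simp [eTwoR, Finset.sum_pair]
  rw [hsum] at h
  have htwo : ((2 : ℝ≥0∞).toReal) = ((2 : ℕ) : ℝ) := by norm_num
  rw [htwo, Real.rpow_natCast] at h
  have h2 : ‖eTwoR 0 + eTwoR 1‖ ^ 2 = 2 := by rw [h]; norm_num
  nlinarith [Real.sq_sqrt (by norm_num : (2:ℝ) ≥ 0), Real.sqrt_nonneg 2,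
    norm_nonneg (eTwoR 0 + eTwoR 1)]

lemma tsum_factor (x y : ellTwoR) (f g : ellTwoR →L[ℝ] ℝ) :
    ∑' mn : ℕ × ℕ, ‖x mn.1‖ * ‖y mn.2‖ * ‖f (eTwoR mn.1)‖ * ‖g (eTwoR mn.2)‖
      = (∑' m, ‖x m‖ * ‖coordFun f m‖) * (∑' n, ‖y n‖ * ‖coordFun g n‖) := by
  have hrw : ∀ mn : ℕ × ℕ,
      ‖x mn.1‖ * ‖y mn.2‖ * ‖f (eTwoR mn.1)‖ * ‖g (eTwoR mn.2)‖
        = (‖x mn.1‖ * ‖coordFun f mn.1‖) * (‖y mn.2‖ * ‖coordFun g mn.2‖) := by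
    intro mn; rw [apply_eTwoR, apply_eTwoR]; ring
  rw [tsum_congr hrw]
  exact (tsum_mul_tsum_of_summable_norm
    ((summable_mul_coord x (coordFun f)).abs.congr (fun m => (Real.norm_eq_abs _).symm))
    ((summable_mul_coord y (coordFun g)).abs.congr (fun n => (Real.norm_eq_abs _).symm))).symm

lemma tsum_block_le (x y : ellTwoR) (f g : ellTwoR →L[ℝ] ℝ) (hf : ‖f‖ ≤ 1) (hg : ‖g‖ ≤ 1) :
    ∑' mn : ℕ × ℕ, ‖x mn.1‖ * ‖y mn.2‖ * ‖f (eTwoR mn.1)‖ * ‖g (eTwoR mn.2)‖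
      ≤ ‖x‖ * ‖y‖ := by
  rw [tsum_factor]
  have h1 : ∑' m, ‖x m‖ * ‖coordFun f m‖ ≤ ‖x‖ := by
    calc _ ≤ ‖x‖ * ‖coordFun f‖ := tsum_mul_coord_le _ _
    _ ≤ ‖x‖ * 1 := by rw [norm_coordFun]; exact mul_le_mul_of_nonneg_left hf (norm_nonneg _)
    _ = ‖x‖ := mul_one _
  have h2 : ∑' n, ‖y n‖ * ‖coordFun g n‖ ≤ ‖y‖ := by
    calc _ ≤ ‖y‖ * ‖coordFun g‖ := tsum_mul_coord_le _ _
    _ ≤ ‖y‖ * 1 := by rw [norm_coordFun]; exact mul_le_mul_of_nonneg_left hg (norm_nonneg _)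
    _ = ‖y‖ := mul_one _
  exact mul_le_mul h1 h2 (tsum_nonneg fun n => by positivity) (norm_nonneg _)

lemma tsum_point (i j : ℕ) (f g : ellTwoR →L[ℝ] ℝ) :
    ∑' mn : ℕ × ℕ, ‖(eTwoR i : ∀ _ : ℕ, ℝ) mn.1‖ * ‖(eTwoR j : ∀ _ : ℕ, ℝ) mn.2‖ *
      ‖f (eTwoR mn.1)‖ * ‖g (eTwoR mn.2)‖ = ‖f (eTwoR i)‖ * ‖g (eTwoR j)‖ := by
  rw [tsum_eq_single (i, j)]
  · simp [eTwoR_apply]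
  · rintro ⟨m, n⟩ hmn
    rcases (not_and_or.1 (by simpa [Prod.ext_iff] using hmn) : m ≠ i ∨ n ≠ j) with h | h <;>
      simp [eTwoR_apply, h]

end Aux


/-- The tensor `v`. -/
noncomputable def vE : ellTwoR ⊗[ℝ] ellTwoR :=
  eTwoR 0 ⊗ₜ[ℝ] eTwoR 0 + eTwoR 0 ⊗ₜ[ℝ] eTwoR 1
    + eTwoR 1 ⊗ₜ[ℝ] eTwoR 1 - eTwoR 1 ⊗ₜ[ℝ] eTwoR 0

noncomputable def zphi : ellTwoR := (Real.sqrt 2)⁻¹ • (eTwoR 0 + eTwoR 1)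

lemma norm_zphi : ‖zphi‖ = 1 := by
  rw [zphi, norm_smul, norm_e0_add_e1, Real.norm_eq_abs,
    abs_of_nonneg (by positivity), inv_mul_cancel₀ (by positivity)]

lemma zphi_apply (m : ℕ) :
    (zphi : ∀ _ : ℕ, ℝ) m = if m = 0 ∨ m = 1 then (Real.sqrt 2)⁻¹ else 0 := by
  rw [zphi, lp.coeFn_smul]
  simp only [Pi.smul_apply, lp.coeFn_add, Pi.add_apply, smul_eq_mul, eTwoR_apply]
  rcases m with _ | _ | m <;> simp

lemma sqrt2_inv_sq : (Real.sqrt 2)⁻¹ * (Real.sqrt 2)⁻¹ = 1 / 2 := by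
  rw [← mul_inv, Real.mul_self_sqrt (by norm_num)]
  norm_num

lemma two_mul_sqrt2_inv : 2 * (Real.sqrt 2)⁻¹ = Real.sqrt 2 := by
  have h := Real.mul_self_sqrt (by norm_num : (2:ℝ) ≥ 0)
  field_simp
  rw [sq, h]

lemma dualPairR_vE (f g : ellTwoR →L[ℝ] ℝ) :
    dualPairR f g vE = f (eTwoR 0) * g (eTwoR 0) + f (eTwoR 0) * g (eTwoR 1)
      + f (eTwoR 1) * g (eTwoR 1) - f (eTwoR 1) * g (eTwoR 0) := by
  simp [vE, map_add, map_sub, dualPairR_tmul]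

lemma injNorm_vE_ub (fg : {f : ellTwoR →L[ℝ] ℝ // ‖f‖ ≤ 1} × {g : ellTwoR →L[ℝ] ℝ // ‖g‖ ≤ 1}) :
    ‖dualPairR fg.1.1 fg.2.1 vE‖ ≤ Real.sqrt 2 := by
  obtain ⟨⟨f, hf⟩, ⟨g, hg⟩⟩ := fg
  rw [dualPairR_vE, Real.norm_eq_abs]
  set a := f (eTwoR 0); set b := f (eTwoR 1); set c := g (eTwoR 0); set d := g (eTwoR 1)
  have hab : a ^ 2 + b ^ 2 ≤ 1 := sq_apply_le f hf
  have hcd : c ^ 2 + d ^ 2 ≤ 1 := sq_apply_le g hg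
  have h2 : (a * c + a * d + b * d - b * c) ^ 2 ≤ 2 := by
    nlinarith [sq_nonneg (a * (d - c) - b * (c + d)), sq_nonneg a, sq_nonneg b,
      sq_nonneg c, sq_nonneg d,
      mul_nonneg (sub_nonneg.2 hab) (sub_nonneg.2 hcd),
      sq_nonneg (a ^ 2 + b ^ 2), sq_nonneg (c ^ 2 + d ^ 2)]
  rw [← Real.sqrt_sq_eq_abs]
  exact Real.sqrt_le_sqrt h2

lemma injNorm_vE : injNormL2R vE = Real.sqrt 2 := by
  rw [injNormL2R]
  refine le_antisymm (ciSup_le injNorm_vE_ub) ?_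
  have hbdd : BddAbove (Set.range fun fg :
      {f : ellTwoR →L[ℝ] ℝ // ‖f‖ ≤ 1} × {g : ellTwoR →L[ℝ] ℝ // ‖g‖ ≤ 1} =>
      ‖dualPairR fg.1.1 fg.2.1 vE‖) := by
    refine ⟨Real.sqrt 2, ?_⟩
    rintro _ ⟨fg, rfl⟩
    exact injNorm_vE_ub fg
  have key : ‖dualPairR (tdl zphi) (tdl (eTwoR 1)) vE‖ = Real.sqrt 2 := by
    have hz0 : (zphi : ∀ _ : ℕ, ℝ) 0 = (Real.sqrt 2)⁻¹ := by rw [zphi_apply]; norm_num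
    have hz1 : (zphi : ∀ _ : ℕ, ℝ) 1 = (Real.sqrt 2)⁻¹ := by rw [zphi_apply]; norm_num
    have he10 : (eTwoR 1 : ∀ _ : ℕ, ℝ) 0 = 0 := by rw [eTwoR_apply]; norm_num
    have he11 : (eTwoR 1 : ∀ _ : ℕ, ℝ) 1 = 1 := by rw [eTwoR_apply]; norm_num
    rw [dualPairR_vE]
    simp only [tdl_apply_e, hz0, hz1, he10, he11]
    rw [show (Real.sqrt 2)⁻¹ * 0 + (Real.sqrt 2)⁻¹ * 1 + (Real.sqrt 2)⁻¹ * 1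
        - (Real.sqrt 2)⁻¹ * 0 = 2 * (Real.sqrt 2)⁻¹ from by ring,
      two_mul_sqrt2_inv, Real.norm_eq_abs, abs_of_nonneg (Real.sqrt_nonneg 2)]
  calc Real.sqrt 2 = ‖dualPairR (tdl zphi) (tdl (eTwoR 1)) vE‖ := key.symm
  _ ≤ _ := le_ciSup hbdd (⟨⟨tdl zphi, by rw [norm_tdl, norm_zphi]⟩,
      ⟨tdl (eTwoR 1), by rw [norm_tdl, norm_eTwoR]⟩⟩ :
      {f : ellTwoR →L[ℝ] ℝ // ‖f‖ ≤ 1} × {g : ellTwoR →L[ℝ] ℝ // ‖g‖ ≤ 1})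


lemma bddAbove_Phi (R : ℕ) (x y : ℕ → ellTwoR) :
    BddAbove (Set.range fun fg :
        {f : ellTwoR →L[ℝ] ℝ // ‖f‖ ≤ 1} × {g : ellTwoR →L[ℝ] ℝ // ‖g‖ ≤ 1} =>
      ∑ r ∈ Finset.range R, ∑' mn : ℕ × ℕ,
        ‖x r mn.1‖ * ‖y r mn.2‖ * ‖fg.1.1 (eTwoR mn.1)‖ * ‖fg.2.1 (eTwoR mn.2)‖) := by
  refine ⟨∑ r ∈ Finset.range R, ‖x r‖ * ‖y r‖, ?_⟩
  rintro _ ⟨fg, rfl⟩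
  exact Finset.sum_le_sum fun r _ => tsum_block_le _ _ _ _ fg.1.2 fg.2.2

lemma coeff_lb {R : ℕ} {x y : ℕ → ellTwoR} (m n : ℕ)
    (hv : vE = ∑ r ∈ Finset.range R, x r ⊗ₜ[ℝ] y r)
    (hm : m = 0 ∨ m = 1) (hn : n = 0 ∨ n = 1) :
    1 ≤ ∑ r ∈ Finset.range R, ‖x r m‖ * ‖y r n‖ := by
  have h := congrArg (dualPairR (tdl (eTwoR m)) (tdl (eTwoR n))) hv
  rw [map_sum] at h
  simp only [dualPairR_tmul, tdl_e_apply] at h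
  have habs : |(dualPairR (tdl (eTwoR m)) (tdl (eTwoR n))) vE| = 1 := by
    rw [dualPairR_vE]
    simp only [tdl_e_apply, eTwoR_apply]
    rcases hm with rfl | rfl <;> rcases hn with rfl | rfl <;> norm_num
  rw [h] at habs
  calc (1:ℝ) = |∑ r ∈ Finset.range R, x r m * y r n| := habs.symm
  _ ≤ ∑ r ∈ Finset.range R, |x r m * y r n| := Finset.abs_sum_le_sum_abs _ _
  _ = ∑ r ∈ Finset.range R, ‖x r m‖ * ‖y r n‖ := by
      refine Finset.sum_congr rfl fun r _ => ?_
      rw [abs_mul, Real.norm_eq_abs, Real.norm_eq_abs]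

lemma norm_tdl_zphi_e (k : ℕ) :
    ‖tdl zphi (eTwoR k)‖ = if k = 0 ∨ k = 1 then (Real.sqrt 2)⁻¹ else 0 := by
  rw [tdl_apply_e, zphi_apply]
  split_ifs
  · exact Real.norm_of_nonneg (by positivity)
  · exact norm_zero

lemma sup_lb_vE {R : ℕ} {x y : ℕ → ellTwoR}
    (hv : vE = ∑ r ∈ Finset.range R, x r ⊗ₜ[ℝ] y r) :
    2 ≤ ⨆ fg : {f : ellTwoR →L[ℝ] ℝ // ‖f‖ ≤ 1} × {g : ellTwoR →L[ℝ] ℝ // ‖g‖ ≤ 1},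
      ∑ r ∈ Finset.range R, ∑' mn : ℕ × ℕ,
        ‖x r mn.1‖ * ‖y r mn.2‖ * ‖fg.1.1 (eTwoR mn.1)‖ * ‖fg.2.1 (eTwoR mn.2)‖ := by
  have hφ : ‖tdl zphi‖ ≤ 1 := by rw [norm_tdl, norm_zphi]
  refine le_trans ?_ (le_ciSup (bddAbove_Phi R x y) (⟨tdl zphi, hφ⟩, ⟨tdl zphi, hφ⟩))
  dsimp only
  classical
  set sq : Finset (ℕ × ℕ) := {(0,0),(0,1),(1,0),(1,1)} with hsq
  have htsum : ∀ r, (∑' mn : ℕ × ℕ, ‖x r mn.1‖ * ‖y r mn.2‖ *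
        ‖tdl zphi (eTwoR mn.1)‖ * ‖tdl zphi (eTwoR mn.2)‖)
      = ∑ mn ∈ sq, ‖x r mn.1‖ * ‖y r mn.2‖ *
        ‖tdl zphi (eTwoR mn.1)‖ * ‖tdl zphi (eTwoR mn.2)‖ := by
    intro r
    refine tsum_eq_sum ?_
    intro mn hmn
    by_cases h1 : mn.1 = 0 ∨ mn.1 = 1
    · by_cases h2 : mn.2 = 0 ∨ mn.2 = 1
      · exfalso
        apply hmn
        have hp : mn = (mn.1, mn.2) := rfl
        rcases h1 with e1 | e1 <;> rcases h2 with e2 | e2 <;>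
          · rw [hsq]
            simp only [Finset.mem_insert, Finset.mem_singleton, Prod.ext_iff]
            tauto
      · rw [norm_tdl_zphi_e mn.2, if_neg h2, mul_zero]
    · rw [norm_tdl_zphi_e mn.1, if_neg h1]
      ring
  simp only [htsum]
  rw [Finset.sum_comm]
  have hmn_lb : ∀ mn ∈ sq, (1:ℝ)/2 ≤ ∑ r ∈ Finset.range R,
      ‖x r mn.1‖ * ‖y r mn.2‖ * ‖tdl zphi (eTwoR mn.1)‖ * ‖tdl zphi (eTwoR mn.2)‖ := by
    intro mn hmn
    have hm1 : mn.1 = 0 ∨ mn.1 = 1 := by fin_cases hmn <;> simp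
    have hm2 : mn.2 = 0 ∨ mn.2 = 1 := by fin_cases hmn <;> simp
    have hzz1 : ‖tdl zphi (eTwoR mn.1)‖ = (Real.sqrt 2)⁻¹ := by
      rw [norm_tdl_zphi_e, if_pos hm1]
    have hzz2 : ‖tdl zphi (eTwoR mn.2)‖ = (Real.sqrt 2)⁻¹ := by
      rw [norm_tdl_zphi_e, if_pos hm2]
    simp only [hzz1, hzz2]
    rw [← Finset.sum_mul, ← Finset.sum_mul]
    have hc := coeff_lb mn.1 mn.2 hv hm1 hm2
    have hs : (0:ℝ) ≤ (Real.sqrt 2)⁻¹ := by positivity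
    calc (1:ℝ)/2 = 1 * (Real.sqrt 2)⁻¹ * (Real.sqrt 2)⁻¹ := by
          rw [one_mul, sqrt2_inv_sq]
    _ ≤ _ := mul_le_mul_of_nonneg_right (mul_le_mul_of_nonneg_right hc hs) hs
  have hcard : ∑ _mn ∈ sq, (1:ℝ)/2 = 2 := by
    rw [hsq, Finset.sum_const,
      (show ({(0,0),(0,1),(1,0),(1,1)} : Finset (ℕ × ℕ)).card = 4 by decide)]
    norm_num
  exact hcard ▸ Finset.sum_le_sum hmn_lb


lemma tsum_point_neg (i j : ℕ) (f g : ellTwoR →L[ℝ] ℝ) :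
    ∑' mn : ℕ × ℕ, ‖(eTwoR i : ∀ _ : ℕ, ℝ) mn.1‖ * ‖((-eTwoR j : ellTwoR) : ∀ _ : ℕ, ℝ) mn.2‖ *
      ‖f (eTwoR mn.1)‖ * ‖g (eTwoR mn.2)‖ = ‖f (eTwoR i)‖ * ‖g (eTwoR j)‖ := by
  have key : ∀ mn : ℕ × ℕ,
      ‖(eTwoR i : ∀ _ : ℕ, ℝ) mn.1‖ * ‖((-eTwoR j : ellTwoR) : ∀ _ : ℕ, ℝ) mn.2‖ *
        ‖f (eTwoR mn.1)‖ * ‖g (eTwoR mn.2)‖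
      = ‖(eTwoR i : ∀ _ : ℕ, ℝ) mn.1‖ * ‖(eTwoR j : ∀ _ : ℕ, ℝ) mn.2‖ *
        ‖f (eTwoR mn.1)‖ * ‖g (eTwoR mn.2)‖ := by
    intro mn
    rw [lp.coeFn_neg, Pi.neg_apply, norm_neg]
  rw [tsum_congr key, tsum_point]

/-- First factor of the canonical representation of `v`. -/
noncomputable def xsv : ℕ → ellTwoR := fun r => if r ≤ 1 then eTwoR 0 else eTwoR 1

/-- Second factor of the canonical representation of `v`. -/
noncomputable def ysv : ℕ → ellTwoR := fun r =>
  if r = 0 then eTwoR 0 else if r = 3 then -eTwoR 0 else eTwoR 1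

lemma rep_vE : vE = ∑ r ∈ Finset.range 4, xsv r ⊗ₜ[ℝ] ysv r := by
  simp only [Finset.sum_range_succ, Finset.sum_range_zero, xsv, ysv]
  norm_num [vE, TensorProduct.tmul_neg]
  abel

lemma phi_val_vE (f g : ellTwoR →L[ℝ] ℝ) :
    ∑ r ∈ Finset.range 4, ∑' mn : ℕ × ℕ,
      ‖xsv r mn.1‖ * ‖ysv r mn.2‖ * ‖f (eTwoR mn.1)‖ * ‖g (eTwoR mn.2)‖
    = (‖f (eTwoR 0)‖ + ‖f (eTwoR 1)‖) * (‖g (eTwoR 0)‖ + ‖g (eTwoR 1)‖) := by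
  simp only [Finset.sum_range_succ, Finset.sum_range_zero, xsv, ysv]
  norm_num
  simp only [← Real.norm_eq_abs]
  rw [tsum_point, tsum_point, tsum_point, tsum_point]
  ring

lemma sup_ub_vE (fg : {f : ellTwoR →L[ℝ] ℝ // ‖f‖ ≤ 1} × {g : ellTwoR →L[ℝ] ℝ // ‖g‖ ≤ 1}) :
    ∑ r ∈ Finset.range 4, ∑' mn : ℕ × ℕ,
      ‖xsv r mn.1‖ * ‖ysv r mn.2‖ * ‖fg.1.1 (eTwoR mn.1)‖ * ‖fg.2.1 (eTwoR mn.2)‖ ≤ 2 := by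
  obtain ⟨⟨f, hf⟩, ⟨g, hg⟩⟩ := fg
  rw [phi_val_vE]
  have hab := sq_apply_le f hf
  have hcd := sq_apply_le g hg
  simp only [Real.norm_eq_abs]
  nlinarith [sq_nonneg (|f (eTwoR 0)| - |f (eTwoR 1)|), sq_nonneg (|g (eTwoR 0)| - |g (eTwoR 1)|),
    sq_abs (f (eTwoR 0)), sq_abs (f (eTwoR 1)), sq_abs (g (eTwoR 0)), sq_abs (g (eTwoR 1)),
    abs_nonneg (f (eTwoR 0)), abs_nonneg (f (eTwoR 1)),
    abs_nonneg (g (eTwoR 0)), abs_nonneg (g (eTwoR 1)),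
    sq_nonneg (|f (eTwoR 0)| + |f (eTwoR 1)| - (|g (eTwoR 0)| + |g (eTwoR 1)|))]

lemma sup_eq_vE :
    (⨆ fg : {f : ellTwoR →L[ℝ] ℝ // ‖f‖ ≤ 1} × {g : ellTwoR →L[ℝ] ℝ // ‖g‖ ≤ 1},
      ∑ r ∈ Finset.range 4, ∑' mn : ℕ × ℕ,
        ‖xsv r mn.1‖ * ‖ysv r mn.2‖ * ‖fg.1.1 (eTwoR mn.1)‖ * ‖fg.2.1 (eTwoR mn.2)‖) = 2 := by
  refine le_antisymm (ciSup_le sup_ub_vE) ?_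
  have hφ : ‖tdl zphi‖ ≤ 1 := by rw [norm_tdl, norm_zphi]
  refine le_trans ?_ (le_ciSup (bddAbove_Phi 4 xsv ysv) (⟨tdl zphi, hφ⟩, ⟨tdl zphi, hφ⟩))
  dsimp only
  rw [phi_val_vE]
  have h0 : ‖tdl zphi (eTwoR 0)‖ = (Real.sqrt 2)⁻¹ := by
    rw [norm_tdl_zphi_e]; norm_num
  have h1 : ‖tdl zphi (eTwoR 1)‖ = (Real.sqrt 2)⁻¹ := by
    rw [norm_tdl_zphi_e]; norm_num
  rw [h0, h1]
  nlinarith [sqrt2_inv_sq]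

lemma alphaBess_vE : alphaBessL2R vE = 2 := by
  rw [alphaBessL2R]
  have hmem : (2:ℝ) ∈ {t : ℝ | ∃ (R : ℕ) (x y : ℕ → ellTwoR),
      vE = ∑ r ∈ Finset.range R, x r ⊗ₜ[ℝ] y r ∧
      t = ⨆ fg : {f : ellTwoR →L[ℝ] ℝ // ‖f‖ ≤ 1} × {g : ellTwoR →L[ℝ] ℝ // ‖g‖ ≤ 1},
        ∑ r ∈ Finset.range R, ∑' mn : ℕ × ℕ,
          ‖x r mn.1‖ * ‖y r mn.2‖ * ‖fg.1.1 (eTwoR mn.1)‖ * ‖fg.2.1 (eTwoR mn.2)‖} :=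
    ⟨4, xsv, ysv, rep_vE, sup_eq_vE.symm⟩
  have hlb : ∀ t ∈ {t : ℝ | ∃ (R : ℕ) (x y : ℕ → ellTwoR),
      vE = ∑ r ∈ Finset.range R, x r ⊗ₜ[ℝ] y r ∧
      t = ⨆ fg : {f : ellTwoR →L[ℝ] ℝ // ‖f‖ ≤ 1} × {g : ellTwoR →L[ℝ] ℝ // ‖g‖ ≤ 1},
        ∑ r ∈ Finset.range R, ∑' mn : ℕ × ℕ,
          ‖x r mn.1‖ * ‖y r mn.2‖ * ‖fg.1.1 (eTwoR mn.1)‖ * ‖fg.2.1 (eTwoR mn.2)‖},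
      (2:ℝ) ≤ t := by
    rintro t ⟨R, x, y, hv, rfl⟩
    exact sup_lb_vE hv
  exact le_antisymm (csInf_le ⟨2, hlb⟩ hmem) (le_csInf ⟨2, hmem⟩ hlb)


lemma injNorm_unit_ub
    (fg : {f : ellTwoR →L[ℝ] ℝ // ‖f‖ ≤ 1} × {g : ellTwoR →L[ℝ] ℝ // ‖g‖ ≤ 1}) :
    ‖dualPairR fg.1.1 fg.2.1 (eTwoR 0 ⊗ₜ[ℝ] eTwoR 0)‖ ≤ 1 := by
  obtain ⟨⟨f, hf⟩, ⟨g, hg⟩⟩ := fg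
  rw [dualPairR_tmul, norm_mul]
  have h1 : ‖f (eTwoR 0)‖ ≤ 1 := by
    calc ‖f (eTwoR 0)‖ ≤ ‖f‖ * ‖eTwoR 0‖ := f.le_opNorm _
    _ ≤ 1 := by rw [norm_eTwoR, mul_one]; exact hf
  have h2 : ‖g (eTwoR 0)‖ ≤ 1 := by
    calc ‖g (eTwoR 0)‖ ≤ ‖g‖ * ‖eTwoR 0‖ := g.le_opNorm _
    _ ≤ 1 := by rw [norm_eTwoR, mul_one]; exact hg
  exact mul_le_one₀ h1 (norm_nonneg _) h2

lemma tdl_e0_le_one : ‖tdl (eTwoR 0)‖ ≤ 1 := by rw [norm_tdl, norm_eTwoR]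

lemma tdl_e0_val : ‖tdl (eTwoR 0) (eTwoR 0)‖ = 1 := by
  rw [tdl_apply_e, eTwoR_apply]
  norm_num

lemma injNorm_unit : injNormL2R (eTwoR 0 ⊗ₜ[ℝ] eTwoR 0) = 1 := by
  rw [injNormL2R]
  refine le_antisymm (ciSup_le injNorm_unit_ub) ?_
  have hbdd : BddAbove (Set.range fun fg :
      {f : ellTwoR →L[ℝ] ℝ // ‖f‖ ≤ 1} × {g : ellTwoR →L[ℝ] ℝ // ‖g‖ ≤ 1} =>
      ‖dualPairR fg.1.1 fg.2.1 (eTwoR 0 ⊗ₜ[ℝ] eTwoR 0)‖) := by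
    refine ⟨1, ?_⟩
    rintro _ ⟨fg, rfl⟩
    exact injNorm_unit_ub fg
  have key : ‖dualPairR (tdl (eTwoR 0)) (tdl (eTwoR 0)) (eTwoR 0 ⊗ₜ[ℝ] eTwoR 0)‖ = 1 := by
    rw [dualPairR_tmul, norm_mul, tdl_e0_val, mul_one]
  calc (1:ℝ) = ‖dualPairR (tdl (eTwoR 0)) (tdl (eTwoR 0)) (eTwoR 0 ⊗ₜ[ℝ] eTwoR 0)‖ := key.symm
  _ ≤ _ := le_ciSup hbdd (⟨⟨tdl (eTwoR 0), tdl_e0_le_one⟩, ⟨tdl (eTwoR 0), tdl_e0_le_one⟩⟩ :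
      {f : ellTwoR →L[ℝ] ℝ // ‖f‖ ≤ 1} × {g : ellTwoR →L[ℝ] ℝ // ‖g‖ ≤ 1})

lemma coeff0_lb {R : ℕ} {x y : ℕ → ellTwoR}
    (hv : eTwoR 0 ⊗ₜ[ℝ] eTwoR 0 = ∑ r ∈ Finset.range R, x r ⊗ₜ[ℝ] y r) :
    1 ≤ ∑ r ∈ Finset.range R, ‖x r 0‖ * ‖y r 0‖ := by
  have h := congrArg (dualPairR (tdl (eTwoR 0)) (tdl (eTwoR 0))) hv
  rw [map_sum] at h
  simp only [dualPairR_tmul, tdl_e_apply] at h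
  have hL : ((eTwoR 0 : ∀ _ : ℕ, ℝ) 0) * ((eTwoR 0 : ∀ _ : ℕ, ℝ) 0) = 1 := by
    rw [eTwoR_apply]; norm_num
  rw [hL] at h
  calc (1:ℝ) = |∑ r ∈ Finset.range R, x r 0 * y r 0| := by rw [← h]; norm_num
  _ ≤ ∑ r ∈ Finset.range R, |x r 0 * y r 0| := Finset.abs_sum_le_sum_abs _ _
  _ = ∑ r ∈ Finset.range R, ‖x r 0‖ * ‖y r 0‖ := by
      refine Finset.sum_congr rfl fun r _ => ?_
      rw [abs_mul, Real.norm_eq_abs, Real.norm_eq_abs]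

lemma sup_lb_unit {R : ℕ} {x y : ℕ → ellTwoR}
    (hv : eTwoR 0 ⊗ₜ[ℝ] eTwoR 0 = ∑ r ∈ Finset.range R, x r ⊗ₜ[ℝ] y r) :
    1 ≤ ⨆ fg : {f : ellTwoR →L[ℝ] ℝ // ‖f‖ ≤ 1} × {g : ellTwoR →L[ℝ] ℝ // ‖g‖ ≤ 1},
      ∑ r ∈ Finset.range R, ∑' mn : ℕ × ℕ,
        ‖x r mn.1‖ * ‖y r mn.2‖ * ‖fg.1.1 (eTwoR mn.1)‖ * ‖fg.2.1 (eTwoR mn.2)‖ := by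
  refine le_trans ?_ (le_ciSup (bddAbove_Phi R x y)
    (⟨tdl (eTwoR 0), tdl_e0_le_one⟩, ⟨tdl (eTwoR 0), tdl_e0_le_one⟩))
  dsimp only
  have hz : ∀ k : ℕ, ‖tdl (eTwoR 0) (eTwoR k)‖ = if k = 0 then 1 else 0 := by
    intro k
    rw [tdl_apply_e, eTwoR_apply]
    split_ifs <;> norm_num
  have hpt : ∀ r, (∑' mn : ℕ × ℕ, ‖x r mn.1‖ * ‖y r mn.2‖ *
        ‖tdl (eTwoR 0) (eTwoR mn.1)‖ * ‖tdl (eTwoR 0) (eTwoR mn.2)‖)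
      = ‖x r 0‖ * ‖y r 0‖ := by
    intro r
    rw [tsum_eq_single ((0,0) : ℕ × ℕ)]
    · rw [hz 0, if_pos rfl]; ring
    · rintro ⟨m, n⟩ hmn
      rcases (not_and_or.1 (by simpa [Prod.ext_iff] using hmn) : m ≠ 0 ∨ n ≠ 0) with h | h
      · rw [hz m, if_neg h]
        ring
      · rw [hz n, if_neg h, mul_zero]
  simp only [hpt]
  exact coeff0_lb hv

lemma alphaBess_unit : alphaBessL2R (eTwoR 0 ⊗ₜ[ℝ] eTwoR 0) = 1 := by
  rw [alphaBessL2R]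
  have hrep : eTwoR 0 ⊗ₜ[ℝ] eTwoR 0
      = ∑ r ∈ Finset.range 1, (fun _ : ℕ => eTwoR 0) r ⊗ₜ[ℝ] (fun _ : ℕ => eTwoR 0) r := by
    rw [Finset.sum_range_one]
  have hsup : (⨆ fg : {f : ellTwoR →L[ℝ] ℝ // ‖f‖ ≤ 1} × {g : ellTwoR →L[ℝ] ℝ // ‖g‖ ≤ 1},
      ∑ r ∈ Finset.range 1, ∑' mn : ℕ × ℕ,
        ‖(fun _ : ℕ => eTwoR 0) r mn.1‖ * ‖(fun _ : ℕ => eTwoR 0) r mn.2‖ *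
          ‖fg.1.1 (eTwoR mn.1)‖ * ‖fg.2.1 (eTwoR mn.2)‖) = 1 := by
    have hval : ∀ fg : {f : ellTwoR →L[ℝ] ℝ // ‖f‖ ≤ 1} × {g : ellTwoR →L[ℝ] ℝ // ‖g‖ ≤ 1},
        (∑ r ∈ Finset.range 1, ∑' mn : ℕ × ℕ,
          ‖(fun _ : ℕ => eTwoR 0) r mn.1‖ * ‖(fun _ : ℕ => eTwoR 0) r mn.2‖ *
            ‖fg.1.1 (eTwoR mn.1)‖ * ‖fg.2.1 (eTwoR mn.2)‖)
          = ‖fg.1.1 (eTwoR 0)‖ * ‖fg.2.1 (eTwoR 0)‖ := by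
      intro fg
      rw [Finset.sum_range_one]
      exact tsum_point 0 0 fg.1.1 fg.2.1
    refine le_antisymm (ciSup_le fun fg => ?_) ?_
    · rw [hval fg]
      obtain ⟨⟨f, hf⟩, ⟨g, hg⟩⟩ := fg
      have h1 : ‖f (eTwoR 0)‖ ≤ 1 := by
        calc ‖f (eTwoR 0)‖ ≤ ‖f‖ * ‖eTwoR 0‖ := f.le_opNorm _
        _ ≤ 1 := by rw [norm_eTwoR, mul_one]; exact hf
      have h2 : ‖g (eTwoR 0)‖ ≤ 1 := by
        calc ‖g (eTwoR 0)‖ ≤ ‖g‖ * ‖eTwoR 0‖ := g.le_opNorm _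
        _ ≤ 1 := by rw [norm_eTwoR, mul_one]; exact hg
      exact mul_le_one₀ h1 (norm_nonneg _) h2
    · refine le_trans ?_ (le_ciSup (bddAbove_Phi 1 _ _)
        (⟨tdl (eTwoR 0), tdl_e0_le_one⟩, ⟨tdl (eTwoR 0), tdl_e0_le_one⟩))
      rw [hval]
      dsimp only
      rw [tdl_e0_val, mul_one]
  have hmem : (1:ℝ) ∈ {t : ℝ | ∃ (R : ℕ) (x y : ℕ → ellTwoR),
      eTwoR 0 ⊗ₜ[ℝ] eTwoR 0 = ∑ r ∈ Finset.range R, x r ⊗ₜ[ℝ] y r ∧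
      t = ⨆ fg : {f : ellTwoR →L[ℝ] ℝ // ‖f‖ ≤ 1} × {g : ellTwoR →L[ℝ] ℝ // ‖g‖ ≤ 1},
        ∑ r ∈ Finset.range R, ∑' mn : ℕ × ℕ,
          ‖x r mn.1‖ * ‖y r mn.2‖ * ‖fg.1.1 (eTwoR mn.1)‖ * ‖fg.2.1 (eTwoR mn.2)‖} :=
    ⟨1, _, _, hrep, hsup.symm⟩
  have hlb : ∀ t ∈ {t : ℝ | ∃ (R : ℕ) (x y : ℕ → ellTwoR),
      eTwoR 0 ⊗ₜ[ℝ] eTwoR 0 = ∑ r ∈ Finset.range R, x r ⊗ₜ[ℝ] y r ∧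
      t = ⨆ fg : {f : ellTwoR →L[ℝ] ℝ // ‖f‖ ≤ 1} × {g : ellTwoR →L[ℝ] ℝ // ‖g‖ ≤ 1},
        ∑ r ∈ Finset.range R, ∑' mn : ℕ × ℕ,
          ‖x r mn.1‖ * ‖y r mn.2‖ * ‖fg.1.1 (eTwoR mn.1)‖ * ‖fg.2.1 (eTwoR mn.2)‖},
      (1:ℝ) ≤ t := by
    rintro t ⟨R, x, y, hv, rfl⟩
    exact sup_lb_unit hv
  exact le_antisymm (csInf_le ⟨1, hlb⟩ hmem) (le_csInf ⟨1, hmem⟩ hlb)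

/-- For the canonical orthonormal basis `𝓕 = 𝓖 = ((e_m, e_m*))` of the
real `ℓ_2` and `v = e_1 ⊗ e_1 + e_1 ⊗ e_2 + e_2 ⊗ e_2 − e_2 ⊗ e_1`, one has
`ε(v) = √2` while `α^Bess_{𝓕,𝓖}(v) = 2`; in particular `α^Bess_{𝓕,𝓖}` is not
proportional to the injective norm on `ℓ_2 ⊗ ℓ_2`. -/
theorem alphaBess_ellTwoR_ne_inj :
    injNormL2R (eTwoR 0 ⊗ₜ[ℝ] eTwoR 0 + eTwoR 0 ⊗ₜ[ℝ] eTwoR 1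
        + eTwoR 1 ⊗ₜ[ℝ] eTwoR 1 - eTwoR 1 ⊗ₜ[ℝ] eTwoR 0) = Real.sqrt 2 ∧
    alphaBessL2R (eTwoR 0 ⊗ₜ[ℝ] eTwoR 0 + eTwoR 0 ⊗ₜ[ℝ] eTwoR 1
        + eTwoR 1 ⊗ₜ[ℝ] eTwoR 1 - eTwoR 1 ⊗ₜ[ℝ] eTwoR 0) = 2 ∧
    ¬ ∃ cst : ℝ, ∀ w : ellTwoR ⊗[ℝ] ellTwoR,
        alphaBessL2R w = cst * injNormL2R w := by
  refine ⟨injNorm_vE, alphaBess_vE, ?_⟩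
  rintro ⟨cst, hcst⟩
  have h1 := hcst vE
  rw [alphaBess_vE, injNorm_vE] at h1
  have h2 := hcst (eTwoR 0 ⊗ₜ[ℝ] eTwoR 0)
  rw [alphaBess_unit, injNorm_unit, mul_one] at h2
  rw [← h2] at h1
  nlinarith [Real.mul_self_sqrt (show (0:ℝ) ≤ 2 by norm_num), Real.sqrt_nonneg 2]
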